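/- Let a ∈ ℝ, γ > 0, P > 1, X = P + γ² − 1 and ĝ = γ²·a/X, and assume a²/X = 1/P − 1/γ² (i.e. P solves the Riccati equation P = (a²/X + γ⁻²)⁻¹). Then γ⁴·(1/X − 1/γ²) ≤ −4·(P/(P−1))·ĝ² if and only if (P + 1)² ≥ 4γ², which (since P > 1 > −1 and γ > 0) holds if and only if P ≥ 2γ − 1. -/

import Mathlib

/-- The curvature condition: with `X = P + γ² − 1`, `ĝ = γ²a/X`, `P > 1`, `γ > 0` and
the Riccati relation `a²/X = 1/P − 1/γ²`, the concavity inequality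
`γ⁴(1/X − 1/γ²) ≤ −4(P/(P−1))ĝ²` holds iff `(P + 1)² ≥ 4γ²`, which (since
`P > 1 > −1` and `γ > 0`) holds iff `P ≥ 2γ − 1`. -/
theorem curvature_condition
    (a γ P X ghat : ℝ) (hγ : 0 < γ) (hP : 1 < P)
    (hX : X = P + γ ^ 2 - 1) (hg : ghat = γ ^ 2 * a / X)
    (hric : a ^ 2 / X = 1 / P - 1 / γ ^ 2) :
    (γ ^ 4 * (1 / X - 1 / γ ^ 2) ≤ -4 * (P / (P - 1)) * ghat ^ 2
      ↔ (P + 1) ^ 2 ≥ 4 * γ ^ 2) ∧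
    ((P + 1) ^ 2 ≥ 4 * γ ^ 2 ↔ P ≥ 2 * γ - 1) := by
  have hγ2 : (0:ℝ) < γ ^ 2 := by positivity
  have hX0 : 0 < X := by nlinarith
  have hP0 : (0:ℝ) < P := by linarith
  have hP1 : (0:ℝ) < P - 1 := by linarith
  have ha2 : a ^ 2 * (P * γ ^ 2) = X * (γ ^ 2 - P) := by
    have h := hric
    field_simp at h
    linarith [h]
  have E1 : γ ^ 4 * (1 / X - 1 / γ ^ 2) = γ ^ 2 * (1 - P) / X := by
    field_simp
    linear_combination (-1) * hX
  have E2 : -4 * (P / (P - 1)) * ghat ^ 2 = -4 * γ ^ 2 * (γ ^ 2 - P) / ((P - 1) * X) := by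
    rw [hg]
    field_simp
    linear_combination (-1) * ha2
  constructor
  · rw [E1, E2, div_le_div_iff₀ hX0 (by positivity),
      show γ ^ 2 * (1 - P) * ((P - 1) * X) = (γ ^ 2 * X) * ((1 - P) * (P - 1)) from by ring,
      show -4 * γ ^ 2 * (γ ^ 2 - P) * X = (γ ^ 2 * X) * (-4 * (γ ^ 2 - P)) from by ring,
      mul_le_mul_iff_right₀ (mul_pos hγ2 hX0)]
    constructor <;> intro h <;> nlinarith [h]
  · constructor
    · intro h
      nlinarith [h, sq_nonneg (P + 1 - 2 * γ)]
    · intro h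
      nlinarith [h]
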